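/- Sharpness of LP on bounded sets: with K, h as in the LP KKT system and Z* = {z ∈ Z : Kz ≥ h}, suppose a Hoffman constant H(K) exists, i.e., dist(z, Z*) ≤ H(K)·‖(h − Kz)⁺‖₂ for all z. Then for every R > 0 the LP primal-dual problem is α-sharp on B_R(0) ∩ Z with α = 1/(H(K)·√(1 + 4R²)): that is, α·dist(z, Z*) ≤ ρ_r(z) for all z ∈ Z with ‖z‖ ≤ R and all r ∈ (0, 2R]. -/

import Mathlib

open scoped RealInnerProductSpace Matrix

/-- The primal-dual space `ℝⁿ × ℝᵐ` equipped with the Euclidean (ℓ²-product) norm. -/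
abbrev PDSpace (n m : ℕ) :=
  WithLp 2 (EuclideanSpace ℝ (Fin n) × EuclideanSpace ℝ (Fin m))

/-- Primal component of a primal-dual point. -/
def xPart {n m : ℕ} (z : PDSpace n m) : EuclideanSpace ℝ (Fin n) :=
  ((WithLp.equiv 2 _) z).1

/-- Dual component of a primal-dual point. -/
def yPart {n m : ℕ} (z : PDSpace n m) : EuclideanSpace ℝ (Fin m) :=
  ((WithLp.equiv 2 _) z).2

/-- Componentwise positive part of a Euclidean vector. -/
noncomputable def posPart {k : ℕ} (v : EuclideanSpace ℝ (Fin k)) :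
    EuclideanSpace ℝ (Fin k) :=
  (EuclideanSpace.equiv (Fin k) ℝ).symm fun i => max (v i) 0

/-- The KKT residual `‖(h − Kz)⁺‖₂` of the LP KKT system `Kz ≥ h`: primal nonnegativity,
primal feasibility `Ax = b`, dual feasibility `Aᵀy ≤ c`, and duality gap `cᵀx ≤ bᵀy`. -/
noncomputable def kktError {n m : ℕ} (A : Matrix (Fin m) (Fin n) ℝ)
    (b : EuclideanSpace ℝ (Fin m)) (c : EuclideanSpace ℝ (Fin n))
    (z : PDSpace n m) : ℝ :=
  Real.sqrt (‖posPart (-xPart z)‖ ^ 2 +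
    ‖Matrix.toEuclideanLin A (xPart z) - b‖ ^ 2 +
    ‖posPart (Matrix.toEuclideanLin Aᵀ (yPart z) - c)‖ ^ 2 +
    (max (⟪c, xPart z⟫ - ⟪b, yPart z⟫) 0) ^ 2)

/- ### Auxiliary lemmas -/

lemma aux_le_of_sq_le_sq {a b : ℝ} (h : a ^ 2 ≤ b ^ 2) (hb : 0 ≤ b) : a ≤ b := by
  calc a ≤ |a| := le_abs_self a
  _ = Real.sqrt (a ^ 2) := (Real.sqrt_sq_eq_abs a).symm
  _ ≤ Real.sqrt (b ^ 2) := Real.sqrt_le_sqrt h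
  _ = b := Real.sqrt_sq hb

lemma aux_sq_bound {a u R e N : ℝ} (ha : 0 ≤ a) (hu : 0 ≤ u) (hR : 0 ≤ R)
    (hae : a ^ 2 + u ^ 2 ≤ e ^ 2) (hN : N ^ 2 = 1 + 4 * R ^ 2) (he : 0 ≤ e) :
    (a + u * R) ^ 2 ≤ (N * e) ^ 2 := by
  have h1 : (N * e) ^ 2 = (1 + 4 * R ^ 2) * e ^ 2 := by rw [mul_pow, hN]
  nlinarith [sq_nonneg (a * R - u), sq_nonneg R, mul_nonneg (mul_nonneg ha hu) hR]

lemma aux_field1 (r e N : ℝ) (hN : N ≠ 0) (he : e ≠ 0) :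
    r / (N * e) * e ^ 2 = r * e / N := by field_simp

lemma aux_field2 (HK N r e : ℝ) (hHK : HK ≠ 0) (hN : N ≠ 0) (hr : r ≠ 0) :
    1 / (HK * N) * (HK * e) = 1 / r * (r * e / N) := by field_simp

lemma aux_max_mul_self (u : ℝ) : max u 0 * u = max u 0 ^ 2 := by
  rcases le_total u 0 with h | h
  · simp [max_eq_right h]
  · rw [max_eq_left h]; ring

lemma xPart_add {n m : ℕ} (a b : PDSpace n m) : xPart (a + b) = xPart a + xPart b := rfl
lemma xPart_sub {n m : ℕ} (a b : PDSpace n m) : xPart (a - b) = xPart a - xPart b := rfl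
lemma xPart_smul {n m : ℕ} (t : ℝ) (a : PDSpace n m) : xPart (t • a) = t • xPart a := rfl
lemma yPart_add {n m : ℕ} (a b : PDSpace n m) : yPart (a + b) = yPart a + yPart b := rfl
lemma yPart_sub {n m : ℕ} (a b : PDSpace n m) : yPart (a - b) = yPart a - yPart b := rfl
lemma yPart_smul {n m : ℕ} (t : ℝ) (a : PDSpace n m) : yPart (t • a) = t • yPart a := rfl

lemma xPart_mk {n m : ℕ} (p : EuclideanSpace ℝ (Fin n) × EuclideanSpace ℝ (Fin m)) :
    xPart ((WithLp.equiv 2 _).symm p) = p.1 := rfl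
lemma yPart_mk {n m : ℕ} (p : EuclideanSpace ℝ (Fin n) × EuclideanSpace ℝ (Fin m)) :
    yPart ((WithLp.equiv 2 _).symm p) = p.2 := rfl

lemma posPart_apply {k : ℕ} (v : EuclideanSpace ℝ (Fin k)) (i : Fin k) :
    posPart v i = max (v i) 0 := rfl

lemma norm_sq_eq_parts {n m : ℕ} (z : PDSpace n m) :
    ‖z‖ ^ 2 = ‖xPart z‖ ^ 2 + ‖yPart z‖ ^ 2 :=
  WithLp.prod_norm_sq_eq_of_L2 z

lemma norm_xPart_le {n m : ℕ} (z : PDSpace n m) : ‖xPart z‖ ≤ ‖z‖ :=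
  aux_le_of_sq_le_sq (by nlinarith [norm_sq_eq_parts z, sq_nonneg ‖yPart z‖]) (norm_nonneg z)

lemma norm_yPart_le {n m : ℕ} (z : PDSpace n m) : ‖yPart z‖ ≤ ‖z‖ :=
  aux_le_of_sq_le_sq (by nlinarith [norm_sq_eq_parts z, sq_nonneg ‖xPart z‖]) (norm_nonneg z)

lemma inner_posPart {k : ℕ} (d : EuclideanSpace ℝ (Fin k)) :
    ⟪posPart d, d⟫ = ‖posPart d‖ ^ 2 := by
  rw [← real_inner_self_eq_norm_sq]
  simp only [PiLp.inner_apply, RCLike.inner_apply, conj_trivial]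
  refine Finset.sum_congr rfl fun i _ => ?_
  rw [posPart_apply]
  rcases le_total (d i) 0 with h | h
  · simp [max_eq_right h]
  · rw [max_eq_left h]

lemma aux_adj {n m : ℕ} (A : Matrix (Fin m) (Fin n) ℝ)
    (u : EuclideanSpace ℝ (Fin n)) (v : EuclideanSpace ℝ (Fin m)) :
    ⟪v, Matrix.toEuclideanLin A u⟫ = ⟪Matrix.toEuclideanLin Aᵀ v, u⟫ := by
  rw [← A.conjTranspose_eq_transpose_of_trivial, Matrix.toEuclideanLin_conjTranspose_eq_adjoint,
    LinearMap.adjoint_inner_left]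

/-- sharpness of LP on bounded sets: with `Z* = {z ∈ Z : Kz ≥ h}` nonempty and
a Hoffman constant `H(K)` satisfying `dist(z, Z*) ≤ H(K)·‖(h − Kz)⁺‖₂` for all `z`, for every
`R > 0` the LP primal-dual problem is `α`-sharp on `B_R(0) ∩ Z` with
`α = 1/(H(K)·√(1 + 4R²))`: i.e. `α·dist(z, Z*) ≤ ρ_r(z)` for all `z ∈ Z` with `‖z‖ ≤ R` and
all `r ∈ (0, 2R]`. -/
theorem lp_sharpness_on_bounded_sets {n m : ℕ}
    (A : Matrix (Fin m) (Fin n) ℝ)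
    (b : EuclideanSpace ℝ (Fin m)) (c : EuclideanSpace ℝ (Fin n))
    (L : EuclideanSpace ℝ (Fin n) → EuclideanSpace ℝ (Fin m) → ℝ)
    (hL : ∀ x y, L x y = ⟪c, x⟫ + ⟪b, y⟫ - ⟪y, Matrix.toEuclideanLin A x⟫)
    (Z : Set (PDSpace n m)) (hZ : Z = {z | ∀ i, 0 ≤ xPart z i})
    (Zstar : Set (PDSpace n m))
    (hZstar : Zstar = {z | (∀ i, 0 ≤ xPart z i) ∧
      Matrix.toEuclideanLin A (xPart z) = b ∧
      (∀ j, Matrix.toEuclideanLin Aᵀ (yPart z) j ≤ c j) ∧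
      ⟪c, xPart z⟫ ≤ ⟪b, yPart z⟫})
    (hne : Zstar.Nonempty)
    (HK : ℝ) (hHK : 0 < HK)
    (hHoffman : ∀ z : PDSpace n m, Metric.infDist z Zstar ≤ HK * kktError A b c z)
    (R : ℝ) (hR : 0 < R) :
    ∀ z ∈ Z, ‖z‖ ≤ R → ∀ r ∈ Set.Ioc (0 : ℝ) (2 * R),
      (1 / (HK * Real.sqrt (1 + 4 * R ^ 2))) * Metric.infDist z Zstar ≤
        (1 / r) * sSup ((fun w : PDSpace n m =>
            L (xPart z) (yPart w) - L (xPart w) (yPart z)) ''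
          {w | w ∈ Z ∧ ‖w - z‖ ≤ r}) := by
  intro z hz hzR r hr
  obtain ⟨hr0, hr2R⟩ := hr
  set x := xPart z with hx
  set y := yPart z with hy
  set q : EuclideanSpace ℝ (Fin m) := Matrix.toEuclideanLin A x - b with hq
  set d : EuclideanSpace ℝ (Fin n) := Matrix.toEuclideanLin Aᵀ y - c with hd
  set s : EuclideanSpace ℝ (Fin n) := posPart d with hs
  set t : ℝ := max (⟪c, x⟫ - ⟪b, y⟫) 0 with ht
  have hx0 : ∀ i, 0 ≤ x i := by rw [hZ] at hz; exact hz
  have hs0 : ∀ i, 0 ≤ s i := fun i => by rw [hs, posPart_apply]; exact le_max_right _ _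
  have ht0 : 0 ≤ t := le_max_right _ _
  set e : ℝ := Real.sqrt (‖q‖ ^ 2 + ‖s‖ ^ 2 + t ^ 2) with he
  have he0 : 0 ≤ e := Real.sqrt_nonneg _
  have he2 : e ^ 2 = ‖q‖ ^ 2 + ‖s‖ ^ 2 + t ^ 2 := Real.sq_sqrt (by positivity)
  have hpos0 : posPart (-x) = 0 := by
    ext i
    rw [posPart_apply]
    have h1 : (-x) i = -(x i) := rfl
    have h2 : (0 : EuclideanSpace ℝ (Fin n)) i = 0 := rfl
    rw [h1, h2, max_eq_right (by linarith [hx0 i])]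
  have hkkt : kktError A b c z = e := by
    rw [kktError, ← hx, ← hy, hpos0, ← hq, ← hd, ← hs, ← ht, he]
    norm_num
  have ht_le : t ≤ e :=
    aux_le_of_sq_le_sq (by nlinarith [he2, sq_nonneg ‖q‖, sq_nonneg ‖s‖]) he0
  clear_value x y q d s t e
  -- the gap-function formula
  have hphi : ∀ w : PDSpace n m, L x (yPart w) - L (xPart w) y
      = ⟪yPart w - y, -q⟫ + ⟪xPart w - x, d⟫ := by
    intro w
    rw [hL, hL, hq, hd]
    simp only [inner_sub_left, inner_sub_right, inner_neg_right]
    have h1 := aux_adj A (xPart w) y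
    have h2 := aux_adj A x y
    linarith [real_inner_comm b (yPart w), real_inner_comm c (xPart w),
      real_inner_comm (Matrix.toEuclideanLin Aᵀ y) (xPart w), real_inner_comm b y,
      real_inner_comm c x, real_inner_comm (Matrix.toEuclideanLin Aᵀ y) x]
  -- bounded above
  have hbdd : BddAbove ((fun w : PDSpace n m => L x (yPart w) - L (xPart w) y) ''
      {w | w ∈ Z ∧ ‖w - z‖ ≤ r}) := by
    refine ⟨r * ‖q‖ + r * ‖d‖, ?_⟩
    rintro v ⟨w, ⟨_, hwr⟩, rfl⟩
    show L x (yPart w) - L (xPart w) y ≤ r * ‖q‖ + r * ‖d‖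
    rw [hphi w]
    have hyw : ‖yPart w - y‖ ≤ r := by
      have h0 : yPart w - y = yPart (w - z) := by rw [yPart_sub, ← hy]
      rw [h0]; exact (norm_yPart_le _).trans hwr
    have hxw : ‖xPart w - x‖ ≤ r := by
      have h0 : xPart w - x = xPart (w - z) := by rw [xPart_sub, ← hx]
      rw [h0]; exact (norm_xPart_le _).trans hwr
    have h1 : ⟪yPart w - y, -q⟫ ≤ ‖yPart w - y‖ * ‖q‖ := by
      simpa [norm_neg] using real_inner_le_norm (yPart w - y) (-q)
    have h2 : ⟪xPart w - x, d⟫ ≤ ‖xPart w - x‖ * ‖d‖ := real_inner_le_norm _ _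
    have := mul_le_mul_of_nonneg_right hyw (norm_nonneg q)
    have := mul_le_mul_of_nonneg_right hxw (norm_nonneg d)
    linarith
  rcases eq_or_lt_of_le he0 with he0' | hepos
  · -- degenerate case e = 0
    have h1 : Metric.infDist z Zstar = 0 :=
      le_antisymm (by simpa [hkkt, ← he0'] using hHoffman z) Metric.infDist_nonneg
    rw [h1, mul_zero]
    have hmem : (0 : ℝ) ∈ (fun w : PDSpace n m => L x (yPart w) - L (xPart w) y) ''
        {w | w ∈ Z ∧ ‖w - z‖ ≤ r} := by
      refine ⟨z, ⟨hz, by simp [hr0.le]⟩, ?_⟩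
      show L x (yPart z) - L (xPart z) y = 0
      rw [hphi z, ← hx, ← hy]
      simp
    exact mul_nonneg (by positivity) (le_csSup hbdd hmem)
  · -- main case e > 0
    set N : ℝ := Real.sqrt (1 + 4 * R ^ 2) with hN
    have hN0 : 0 < N := Real.sqrt_pos.mpr (by positivity)
    have hN2 : N ^ 2 = 1 + 4 * R ^ 2 := Real.sq_sqrt (by positivity)
    have hN2R : 2 * R ≤ N := aux_le_of_sq_le_sq (by nlinarith) hN0.le
    set δ : ℝ := r / (N * e) with hδ
    have hδ0 : 0 < δ := div_pos hr0 (mul_pos hN0 hepos)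
    set G : PDSpace n m := (WithLp.equiv 2 _).symm (s, -q) with hG
    set g : PDSpace n m := G - t • z with hg
    have hgx : xPart g = s - t • x := by rw [hg, xPart_sub, xPart_smul, hG, xPart_mk, ← hx]
    have hgy : yPart g = -q - t • y := by rw [hg, yPart_sub, yPart_smul, hG, yPart_mk, ← hy]
    set w : PDSpace n m := z + δ • g with hw
    have hwx : xPart w = x + δ • (s - t • x) := by
      rw [hw, xPart_add, xPart_smul, hgx, ← hx]
    have hwy : yPart w = y + δ • (-q - t • y) := by
      rw [hw, yPart_add, yPart_smul, hgy, ← hy]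
    clear_value N δ G g w
    have hδt : δ * t ≤ 1 := by
      rw [hδ, div_mul_eq_mul_div, div_le_one (mul_pos hN0 hepos)]
      calc r * t ≤ (2 * R) * e := mul_le_mul hr2R ht_le ht0 (by positivity)
      _ ≤ N * e := mul_le_mul_of_nonneg_right hN2R he0
    have hwZ : w ∈ Z := by
      rw [hZ]
      intro i
      have happ : xPart w i = (1 - δ * t) * x i + δ * s i := by
        rw [hwx]
        simp only [PiLp.add_apply, PiLp.smul_apply, PiLp.sub_apply, smul_eq_mul]
        ring
      rw [happ]
      exact add_nonneg (mul_nonneg (by linarith) (hx0 i)) (mul_nonneg hδ0.le (hs0 i))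
    have ha2 : ‖G‖ ^ 2 = ‖s‖ ^ 2 + ‖q‖ ^ 2 := by
      rw [WithLp.prod_norm_sq_eq_of_L2]
      have h1 : G.fst = s := by rw [hG]; rfl
      have h2 : G.snd = -q := by rw [hG]; rfl
      rw [h1, h2, norm_neg]
    have hgnorm : ‖g‖ ≤ N * e := by
      have h1 : ‖g‖ ≤ ‖G‖ + t * R := by
        rw [hg]
        refine (norm_sub_le _ _).trans ?_
        rw [norm_smul, Real.norm_eq_abs, abs_of_nonneg ht0]
        exact add_le_add le_rfl (mul_le_mul_of_nonneg_left hzR ht0)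
      refine h1.trans (aux_le_of_sq_le_sq ?_ (by positivity))
      exact aux_sq_bound (norm_nonneg G) ht0 hR.le (by rw [ha2, he2]; ring_nf; linarith) hN2 he0
    have hwr : ‖w - z‖ ≤ r := by
      have hwz : w - z = δ • g := by rw [hw]; abel
      rw [hwz, norm_smul, Real.norm_eq_abs, abs_of_nonneg hδ0.le]
      calc δ * ‖g‖ ≤ δ * (N * e) := mul_le_mul_of_nonneg_left hgnorm hδ0.le
      _ = r := by rw [hδ]; exact div_mul_cancel₀ r (mul_pos hN0 hepos).ne'
    -- the value at w
    have hval : L x (yPart w) - L (xPart w) y = δ * e ^ 2 := by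
      rw [hphi w, hwx, hwy]
      have h1 : y + δ • (-q - t • y) - y = δ • (-q - t • y) := by abel
      have h2 : x + δ • (s - t • x) - x = δ • (s - t • x) := by abel
      rw [h1, h2, real_inner_smul_left, real_inner_smul_left]
      have hinner : ⟪y, q⟫ - ⟪x, d⟫ = ⟪c, x⟫ - ⟪b, y⟫ := by
        rw [hq, hd]
        simp only [inner_sub_right]
        have h3 := aux_adj A x y
        linarith [real_inner_comm (Matrix.toEuclideanLin Aᵀ y) x, real_inner_comm c x,
          real_inner_comm b y]
      have hsd : ⟪s, d⟫ = ‖s‖ ^ 2 := by rw [hs]; exact inner_posPart d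
      have htt : t * (⟪c, x⟫ - ⟪b, y⟫) = t ^ 2 := by rw [ht]; exact aux_max_mul_self _
      have hexp : ⟪-q - t • y, -q⟫ + ⟪s - t • x, d⟫ = ‖q‖ ^ 2 + ‖s‖ ^ 2 + t ^ 2 := by
        simp only [inner_sub_left, inner_neg_left, inner_neg_right, real_inner_smul_left]
        rw [real_inner_self_eq_norm_sq, hsd]
        have h6 : t * ⟪y, q⟫ - t * ⟪x, d⟫ = t ^ 2 := by rw [← mul_sub, hinner]; exact htt
        linarith [h6]
      rw [← mul_add, hexp, he2]
    have hsup : r * e / N ≤ sSup ((fun w : PDSpace n m => L x (yPart w) - L (xPart w) y) ''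
        {w | w ∈ Z ∧ ‖w - z‖ ≤ r}) := by
      have hmem : δ * e ^ 2 ∈ (fun w : PDSpace n m => L x (yPart w) - L (xPart w) y) ''
          {w | w ∈ Z ∧ ‖w - z‖ ≤ r} := ⟨w, ⟨hwZ, hwr⟩, hval⟩
      have h4 := le_csSup hbdd hmem
      have h5 : r * e / N = δ * e ^ 2 := by
        rw [hδ]; exact (aux_field1 r e N hN0.ne' hepos.ne').symm
      linarith
    calc (1 / (HK * N)) * Metric.infDist z Zstar ≤ (1 / (HK * N)) * (HK * e) := by
          refine mul_le_mul_of_nonneg_left ?_ (by positivity)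
          simpa [hkkt] using hHoffman z
    _ = (1 / r) * (r * e / N) := aux_field2 HK N r e hHK.ne' hN0.ne' hr0.ne'
    _ ≤ (1 / r) * sSup ((fun w : PDSpace n m => L x (yPart w) - L (xPart w) y) ''
        {w | w ∈ Z ∧ ‖w - z‖ ≤ r}) := mul_le_mul_of_nonneg_left hsup (by positivity)
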